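/- Under the standing hypotheses (with α > 0), every solution of the four-dimensional system with nonnegative initial data satisfies X(t) → 0, B(t) → 0, s(t) → s* and P(t) → P* as t → +∞ for some finite s* ≥ 0 and P* ≥ P0, and s* ≤ s0 + [(1 + m_s Y_{B/s}/k_d)·X0 + α·B0] / (α·Y_{B/s}). -/

import Mathlib

open Set Filter Real

private lemma antiOn_of_deriv' (f g : ℝ → ℝ) (a : ℝ)
    (hf : ∀ t ∈ Set.Ici a, HasDerivAt f (g t) t)
    (hg : ∀ t ∈ Set.Ici a, g t ≤ 0) : AntitoneOn f (Set.Ici a) := by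
  apply antitoneOn_of_deriv_nonpos (convex_Ici a)
  · exact fun t ht => (hf t ht).continuousAt.continuousWithinAt
  · intro t ht
    rw [interior_Ici] at ht
    exact (hf t (Set.mem_Ici.mpr (le_of_lt ht))).differentiableAt.differentiableWithinAt
  · intro t ht
    rw [interior_Ici] at ht
    rw [(hf t (Set.mem_Ici.mpr (le_of_lt ht))).deriv]
    exact hg t (Set.mem_Ici.mpr (le_of_lt ht))

private lemma monoOn_of_deriv' (f g : ℝ → ℝ) (a : ℝ)
    (hf : ∀ t ∈ Set.Ici a, HasDerivAt f (g t) t)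
    (hg : ∀ t ∈ Set.Ici a, 0 ≤ g t) : MonotoneOn f (Set.Ici a) := by
  apply monotoneOn_of_deriv_nonneg (convex_Ici a)
  · exact fun t ht => (hf t ht).continuousAt.continuousWithinAt
  · intro t ht
    rw [interior_Ici] at ht
    exact (hf t (Set.mem_Ici.mpr (le_of_lt ht))).differentiableAt.differentiableWithinAt
  · intro t ht
    rw [interior_Ici] at ht
    rw [(hf t (Set.mem_Ici.mpr (le_of_lt ht))).deriv]
    exact hg t (Set.mem_Ici.mpr (le_of_lt ht))

private lemma tendsto_of_antiOn (f : ℝ → ℝ) (m : ℝ)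
    (hf : AntitoneOn f (Set.Ici 0)) (hm : ∀ t ∈ Set.Ici (0:ℝ), m ≤ f t) :
    ∃ L, Tendsto f atTop (nhds L) ∧ m ≤ L ∧ ∀ t ∈ Set.Ici (0:ℝ), L ≤ f t := by
  set g : ℝ → ℝ := fun t => f (max t 0) with hg
  have hga : Antitone g := fun s t hst =>
    hf (Set.mem_Ici.mpr (le_max_right _ _)) (Set.mem_Ici.mpr (le_max_right _ _)) (max_le_max hst le_rfl)
  have hbdd : BddBelow (Set.range g) := ⟨m, by rintro _ ⟨t, rfl⟩; exact hm _ (Set.mem_Ici.mpr (le_max_right _ _))⟩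
  have hconv := tendsto_atTop_ciInf hga hbdd
  refine ⟨⨅ t, g t, ?_, ?_, ?_⟩
  · apply hconv.congr'
    filter_upwards [eventually_ge_atTop (0:ℝ)] with t ht
    simp [hg, max_eq_left ht]
  · exact le_ciInf fun t => hm _ (Set.mem_Ici.mpr (le_max_right _ _))
  · intro t ht
    have := ciInf_le hbdd t
    simpa [hg, max_eq_left (Set.mem_Ici.mp ht)] using this

private lemma tendsto_of_monoOn (f : ℝ → ℝ) (m : ℝ)
    (hf : MonotoneOn f (Set.Ici 0)) (hm : ∀ t ∈ Set.Ici (0:ℝ), f t ≤ m) :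
    ∃ L, Tendsto f atTop (nhds L) ∧ ∀ t ∈ Set.Ici (0:ℝ), f t ≤ L := by
  set g : ℝ → ℝ := fun t => f (max t 0) with hg
  have hga : Monotone g := fun s t hst =>
    hf (Set.mem_Ici.mpr (le_max_right _ _)) (Set.mem_Ici.mpr (le_max_right _ _)) (max_le_max hst le_rfl)
  have hbdd : BddAbove (Set.range g) := ⟨m, by rintro _ ⟨t, rfl⟩; exact hm _ (Set.mem_Ici.mpr (le_max_right _ _))⟩
  have hconv := tendsto_atTop_ciSup hga hbdd
  refine ⟨⨆ t, g t, ?_, ?_⟩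
  · apply hconv.congr'
    filter_upwards [eventually_ge_atTop (0:ℝ)] with t ht
    simp [hg, max_eq_left ht]
  · intro t ht
    have := le_ciSup hbdd t
    simpa [hg, max_eq_left (Set.mem_Ici.mp ht)] using this

set_option maxHeartbeats 1000000 in
/-- Convergence theorem: every nonnegative solution of the Trichoderma system
satisfies `X(t) → 0`, `B(t) → 0`, `s(t) → s*`, `P(t) → P*` with `s* ≥ 0`,
`P* ≥ P0`, and `s* ≤ s0 + ((1 + m_s Y_{B/s}/k_d) X0 + α B0)/(α Y_{B/s})`. -/
theorem stmt_12 (μ : ℝ → ℝ) (KH α kd YB YP ms mP : ℝ) (X B S P : ℝ → ℝ)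
    (hμ : ContDiff ℝ 1 μ) (hμ0 : μ 0 = 0) (hμpos : ∀ x, 0 < x → 0 < μ x)
    (hkd : 0 < kd) (hkdmax : ∃ x, kd < μ x)
    (hKH : 0 < KH) (hα0 : 0 < α) (hα1 : α < 1)
    (hYB : 0 < YB) (hYB1 : YB < 1) (hYP : 0 < YP) (hYP1 : YP < 1)
    (hms : 0 < ms) (hmP : 0 < mP)
    (hinit : 0 ≤ X 0 ∧ 0 ≤ B 0 ∧ 0 ≤ S 0 ∧ 0 ≤ P 0)
    (hpos : ∀ t, 0 ≤ t → 0 ≤ X t ∧ 0 ≤ B t ∧ 0 ≤ S t ∧ 0 ≤ P t)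
    (hODE : ∀ t, 0 ≤ t →
      HasDerivAt X (-KH * X t + α * kd * B t) t ∧
      HasDerivAt B ((μ (S t) - kd) * B t) t ∧
      HasDerivAt S (-(μ (S t) / YB + ms) * B t + KH * X t) t ∧
      HasDerivAt P ((μ (S t) / YP + mP) * B t) t) :
    ∃ sstar Pstar : ℝ,
      Filter.Tendsto X Filter.atTop (nhds 0) ∧
      Filter.Tendsto B Filter.atTop (nhds 0) ∧
      Filter.Tendsto S Filter.atTop (nhds sstar) ∧
      Filter.Tendsto P Filter.atTop (nhds Pstar) ∧
      0 ≤ sstar ∧ P 0 ≤ Pstar ∧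
      sstar ≤ S 0 + ((1 + ms * YB / kd) * X 0 + α * B 0) / (α * YB) := by
  obtain ⟨hX0, hB0, hS0, hP0⟩ := hinit
  set c0 : ℝ := ms + kd / YB - kd * α with hc0def
  have hc0 : 0 < c0 := by
    have h2 : kd ≤ kd / YB := by
      rw [le_div_iff₀ hYB]; nlinarith
    have h1 : kd * α < kd := by nlinarith
    simp only [hc0def]; linarith
  set W : ℝ → ℝ := fun t => S t + X t + B t / YB with hWdef
  have hWderiv : ∀ t ∈ Set.Ici (0:ℝ), HasDerivAt W (-(c0 * B t)) t := by
    intro t ht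
    obtain ⟨hX', hB', hS', hP'⟩ := hODE t ht
    have h := (hS'.add hX').add (hB'.div_const YB)
    refine h.congr_deriv ?_
    simp only [hc0def]
    field_simp
    ring
  have hWnonneg : ∀ t ∈ Set.Ici (0:ℝ), 0 ≤ W t := by
    intro t ht
    obtain ⟨h1, h2, h3, _⟩ := hpos t ht
    have : 0 ≤ B t / YB := div_nonneg h2 hYB.le
    simp only [hWdef]; linarith
  have hWanti : AntitoneOn W (Set.Ici 0) := by
    apply antiOn_of_deriv' W _ 0 hWderiv
    intro t ht
    have := (hpos t ht).2.1
    nlinarith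
-- continuing within the theorem (replace `trivial`)
  have hμnn : ∀ x : ℝ, 0 ≤ x → 0 ≤ μ x := by
    intro x hx
    rcases hx.lt_or_eq with h | h
    · exact (hμpos x h).le
    · rw [← h, hμ0]
  -- u(t) = B t * exp (kd * t) is monotone on [0,∞)
  have hexp : ∀ t : ℝ, HasDerivAt (fun τ => Real.exp (kd * τ)) (Real.exp (kd * t) * kd) t := by
    intro t
    have := ((hasDerivAt_id t).const_mul kd).exp
    simpa using this
  have hBexp : MonotoneOn (fun t => B t * Real.exp (kd * t)) (Set.Ici 0) := by
    apply monoOn_of_deriv' _ (fun t => μ (S t) * B t * Real.exp (kd * t)) 0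
    · intro t ht
      have hB' := (hODE t ht).2.1
      have := hB'.mul (hexp t)
      refine this.congr_deriv ?_
      ring
    · intro t ht
      obtain ⟨_, hBt, hSt, _⟩ := hpos t ht
      have := hμnn (S t) hSt
      positivity
  -- gap inequality
  have hgap : ∀ t ∈ Set.Ici (0:ℝ), c0 / kd * (1 - Real.exp (-kd)) * B t ≤ W t - W (t + 1) := by
    intro t ht
    set h : ℝ → ℝ := fun τ => W τ - c0 / kd * (B t * Real.exp (kd * t)) * Real.exp (-(kd * τ))
      with hhdef
    have hanti : AntitoneOn h (Set.Ici t) := by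
      apply antiOn_of_deriv' h
        (fun τ => -(c0 * B τ) + c0 / kd * (B t * Real.exp (kd * t)) * Real.exp (-(kd * τ)) * kd) t
      · intro τ hτ
        have hτ0 : τ ∈ Set.Ici (0:ℝ) := Set.mem_Ici.mpr (le_trans ht hτ)
        have hexp' : HasDerivAt (fun τ => Real.exp (-(kd * τ))) (Real.exp (-(kd * τ)) * (-kd)) τ := by
          have := (((hasDerivAt_id τ).const_mul kd).neg).exp
          simpa using this
        have := (hWderiv τ hτ0).sub ((hexp'.const_mul (c0 / kd * (B t * Real.exp (kd * t)))))
        refine this.congr_deriv ?_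
        ring
      · intro τ hτ
        have hmono := hBexp ht (Set.mem_Ici.mpr (le_trans ht hτ)) hτ
        have hkd' : (0:ℝ) < kd := hkd
        have key : c0 / kd * (B t * Real.exp (kd * t)) * Real.exp (-(kd * τ)) * kd
            ≤ c0 * B τ := by
          have h1 : c0 / kd * kd = c0 := by field_simp
          have h2 : B t * Real.exp (kd * t) * Real.exp (-(kd * τ)) ≤ B τ := by

            have hle : B t * Real.exp (kd * t) * Real.exp (-(kd * τ))
                ≤ B τ * Real.exp (kd * τ) * Real.exp (-(kd * τ)) := by
              apply mul_le_mul_of_nonneg_right hmono (Real.exp_nonneg _)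
            calc B t * Real.exp (kd * t) * Real.exp (-(kd * τ))
                ≤ B τ * Real.exp (kd * τ) * Real.exp (-(kd * τ)) := hle
              _ = B τ * Real.exp (kd * τ + -(kd * τ)) := by rw [mul_assoc, ← Real.exp_add]
              _ = B τ := by simp
          calc c0 / kd * (B t * Real.exp (kd * t)) * Real.exp (-(kd * τ)) * kd
              = c0 * (B t * Real.exp (kd * t) * Real.exp (-(kd * τ))) := by field_simp
            _ ≤ c0 * B τ := by apply mul_le_mul_of_nonneg_left h2 hc0.le
        linarith
    have hle := hanti (Set.self_mem_Ici) (by simp : t ≤ t + 1) (by linarith : t ≤ t + 1)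
    simp only [hhdef] at hle
    have e1 : Real.exp (kd * t) * Real.exp (-(kd * t)) = 1 := by
      rw [← Real.exp_add]; simp
    have e2 : Real.exp (kd * t) * Real.exp (-(kd * (t + 1))) = Real.exp (-kd) := by
      rw [← Real.exp_add]; ring_nf
    have hA : c0 / kd * (B t * Real.exp (kd * t)) * Real.exp (-(kd * (t + 1)))
        = c0 / kd * B t * Real.exp (-kd) := by
      linear_combination (c0 / kd * B t) * e2
    have hB' : c0 / kd * (B t * Real.exp (kd * t)) * Real.exp (-(kd * t))
        = c0 / kd * B t := by
      linear_combination (c0 / kd * B t) * e1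
    rw [hA, hB'] at hle
    nlinarith [hle]
  obtain ⟨L, hWtend, hL0, hLle⟩ := tendsto_of_antiOn W 0 hWanti hWnonneg
  -- B → 0
  have hWshift : Tendsto (fun t => W (t + 1)) atTop (nhds L) :=
    hWtend.comp (tendsto_atTop_add_const_right _ 1 tendsto_id)
  have hgapt : Tendsto (fun t => W t - W (t + 1)) atTop (nhds 0) := by
    simpa using hWtend.sub hWshift
  have hkexp : 0 < 1 - Real.exp (-kd) := by
    have h1 : Real.exp (-kd) < 1 := by
      calc Real.exp (-kd) < Real.exp 0 := Real.exp_lt_exp.mpr (by linarith)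
        _ = 1 := Real.exp_zero
    linarith
  have hBtend : Tendsto B atTop (nhds 0) := by
    apply squeeze_zero' (f := B)
      (g := fun t => kd / (c0 * (1 - Real.exp (-kd))) * (W t - W (t + 1)))
    · filter_upwards [eventually_ge_atTop (0:ℝ)] with t ht
      exact (hpos t ht).2.1
    · filter_upwards [eventually_ge_atTop (0:ℝ)] with t ht
      have hq : (0:ℝ) < c0 / kd * (1 - Real.exp (-kd)) := mul_pos (div_pos hc0 hkd) hkexp
      have h := hgap t ht
      have h2 : B t ≤ (c0 / kd * (1 - Real.exp (-kd)))⁻¹ * (W t - W (t + 1)) := by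
        rw [← mul_le_mul_iff_right₀ hq]
        calc c0 / kd * (1 - Real.exp (-kd)) * B t ≤ W t - W (t + 1) := h
          _ = c0 / kd * (1 - Real.exp (-kd)) *
              ((c0 / kd * (1 - Real.exp (-kd)))⁻¹ * (W t - W (t + 1))) := by
            rw [← mul_assoc, mul_inv_cancel₀ hq.ne', one_mul]
      have h3 : (c0 / kd * (1 - Real.exp (-kd)))⁻¹ = kd / (c0 * (1 - Real.exp (-kd))) := by
        field_simp
      rw [h3] at h2
      exact h2
    · simpa using hgapt.const_mul (kd / (c0 * (1 - Real.exp (-kd))))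
  -- X → 0
  have hXtend : Tendsto X atTop (nhds 0) := by
    rw [Metric.tendsto_atTop]
    intro ε hε
    set δ : ℝ := ε * KH / (2 * (α * kd)) with hδdef
    have hδ : 0 < δ := by positivity
    obtain ⟨T0, hT0⟩ := Metric.tendsto_atTop.mp hBtend δ hδ
    set T' : ℝ := max T0 0 with hT'def
    have hT'0 : (0:ℝ) ≤ T' := le_max_right _ _
    have hBsmall : ∀ τ, T' ≤ τ → B τ ≤ δ := by
      intro τ hτ
      have := hT0 τ (le_trans (le_max_left _ _) hτ)
      rw [Real.dist_eq, sub_zero] at this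
      exact le_of_lt (lt_of_abs_lt this)
    -- φ is antitone on [T', ∞)
    have hφanti : AntitoneOn (fun τ => Real.exp (KH * τ) * (X τ - ε / 2)) (Set.Ici T') := by
      apply antiOn_of_deriv' _ (fun τ => Real.exp (KH * τ) * (α * kd * B τ - KH * (ε / 2))) T'
      · intro τ hτ
        have hX' := (hODE τ (le_trans hT'0 hτ)).1
        have hexpKH : HasDerivAt (fun τ => Real.exp (KH * τ)) (Real.exp (KH * τ) * KH) τ := by
          have := ((hasDerivAt_id τ).const_mul KH).exp
          simpa using this
        have := hexpKH.mul (hX'.sub_const (ε / 2))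
        refine this.congr_deriv ?_
        ring
      · intro τ hτ
        have hB := hBsmall τ hτ
        have h1 : α * kd * B τ ≤ α * kd * δ := by
          apply mul_le_mul_of_nonneg_left hB (by positivity)
        have h2 : α * kd * δ = KH * (ε / 2) := by
          rw [hδdef]; field_simp
        have h3 : α * kd * B τ - KH * (ε / 2) ≤ 0 := by linarith
        exact mul_nonpos_of_nonneg_of_nonpos (Real.exp_nonneg _) h3
    -- hence exponential decay of X towards ε/2
    have hXbound : ∀ τ, T' ≤ τ → X τ ≤ ε / 2 + Real.exp (KH * T' - KH * τ) * (X T' + ε) := by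
      intro τ hτ
      have hφ := hφanti (Set.self_mem_Ici) hτ hτ
      simp only at hφ
      have e3 : Real.exp (KH * T' - KH * τ) * Real.exp (KH * τ) = Real.exp (KH * T') := by
        rw [← Real.exp_add]; ring_nf
      have h1 : (X τ - ε / 2) * Real.exp (KH * τ)
          ≤ (Real.exp (KH * T' - KH * τ) * (X T' - ε / 2)) * Real.exp (KH * τ) := by
        calc (X τ - ε / 2) * Real.exp (KH * τ)
            = Real.exp (KH * τ) * (X τ - ε / 2) := by ring
          _ ≤ Real.exp (KH * T') * (X T' - ε / 2) := hφ
          _ = (Real.exp (KH * T' - KH * τ) * (X T' - ε / 2)) * Real.exp (KH * τ) := by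
            linear_combination (X T' - ε / 2) * e3.symm
      have h2 : X τ - ε / 2 ≤ Real.exp (KH * T' - KH * τ) * (X T' - ε / 2) :=
        le_of_mul_le_mul_right h1 (Real.exp_pos _)
      have h4 : Real.exp (KH * T' - KH * τ) * (X T' - ε / 2)
          ≤ Real.exp (KH * T' - KH * τ) * (X T' + ε) := by
        apply mul_le_mul_of_nonneg_left (by linarith) (Real.exp_nonneg _)
      linarith
    -- the exponential term tends to 0
    have hlin : Tendsto (fun τ : ℝ => KH * T' - KH * τ) atTop atBot := by
      have h1 : Tendsto (fun τ : ℝ => KH * τ) atTop atTop :=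
        Tendsto.const_mul_atTop hKH tendsto_id
      have h2 : Tendsto (fun τ : ℝ => -(KH * τ)) atTop atBot := tendsto_neg_atBot_iff.mpr h1
      simpa [sub_eq_add_neg] using tendsto_atBot_add_const_left atTop (KH * T') h2
    have hexp0 : Tendsto (fun τ => Real.exp (KH * T' - KH * τ) * (X T' + ε)) atTop (nhds 0) := by
      have := (Real.tendsto_exp_atBot.comp hlin).mul_const (X T' + ε)
      simpa using this
    have hev : ∀ᶠ τ in atTop, Real.exp (KH * T' - KH * τ) * (X T' + ε) < ε / 2 :=
      hexp0.eventually_lt_const (by linarith)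
    obtain ⟨N, hN⟩ := (hev.and (eventually_ge_atTop T')).exists_forall_of_atTop
    refine ⟨N, fun n hn => ?_⟩
    obtain ⟨h5, h6⟩ := hN n hn
    have hXn : 0 ≤ X n := (hpos n (le_trans hT'0 h6)).1
    rw [Real.dist_eq, sub_zero, abs_of_nonneg hXn]
    have := hXbound n h6
    linarith
  -- S → L
  have hStend : Tendsto S atTop (nhds L) := by
    have h1 : Tendsto (fun t => W t - X t - B t / YB) atTop (nhds (L - 0 - 0 / YB)) :=
      (hWtend.sub hXtend).sub (hBtend.div_const YB)
    have h2 : ∀ t, W t - X t - B t / YB = S t := by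
      intro t; simp only [hWdef]; ring
    simpa [h2] using h1.congr h2
  -- bound on L
  have hLbound : L ≤ S 0 + ((1 + ms * YB / kd) * X 0 + α * B 0) / (α * YB) := by
    have h1 : L ≤ W 0 := hLle 0 Set.self_mem_Ici
    have key : X 0 + B 0 / YB ≤ ((1 + ms * YB / kd) * X 0 + α * B 0) / (α * YB) := by
      rw [le_div_iff₀ (by positivity : (0:ℝ) < α * YB)]
      have e : B 0 / YB * (α * YB) = α * B 0 := by field_simp
      have hαYB : α * YB ≤ 1 := by nlinarith
      have hmsk : 0 ≤ ms * YB / kd := by positivity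
      have h8 : X 0 * (α * YB) ≤ X 0 * (1 + ms * YB / kd) :=
        mul_le_mul_of_nonneg_left (by linarith) hX0
      nlinarith [e, h8]
    have h2 : W 0 = S 0 + X 0 + B 0 / YB := rfl
    rw [h2] at h1
    linarith
  -- P bounded and monotone
  obtain ⟨xm, hxmem, hxmax'⟩ :=
    (isCompact_Icc : IsCompact (Set.Icc (0:ℝ) (W 0))).exists_isMaxOn
      ⟨0, Set.left_mem_Icc.mpr (hWnonneg 0 Set.self_mem_Ici)⟩ hμ.continuous.continuousOn
  have hxmax : ∀ y ∈ Set.Icc (0:ℝ) (W 0), μ y ≤ μ xm := fun y hy => hxmax' hy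
  set C : ℝ := μ xm with hCdef
  have hCnn : 0 ≤ C := hμnn _ hxmem.1
  have hSmem : ∀ t ∈ Set.Ici (0:ℝ), S t ∈ Set.Icc 0 (W 0) := by
    intro t ht
    obtain ⟨h1, h2, h3, _⟩ := hpos t ht
    have h4 : 0 ≤ B t / YB := div_nonneg h2 hYB.le
    have h5 : S t ≤ W t := by simp only [hWdef]; linarith
    have h6 : W t ≤ W 0 := hWanti Set.self_mem_Ici ht ht
    exact ⟨h3, by linarith⟩
  set κ : ℝ := (C / YP + mP) / c0 with hκdef
  have hκ : 0 ≤ κ := by positivity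
  have hΨanti : AntitoneOn (fun τ => P τ + κ * W τ) (Set.Ici 0) := by
    apply antiOn_of_deriv' _ (fun τ => (μ (S τ) / YP + mP) * B τ + κ * -(c0 * B τ)) 0
    · intro τ hτ
      exact ((hODE τ hτ).2.2.2).add ((hWderiv τ hτ).const_mul κ)
    · intro τ hτ
      have hB := (hpos τ hτ).2.1
      have hμle : μ (S τ) ≤ C := hxmax _ (hSmem τ hτ)
      have hcc : κ * c0 = C / YP + mP := div_mul_cancel₀ _ hc0.ne'
      have h6 : κ * -(c0 * B τ) = -((C / YP + mP) * B τ) := by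
        linear_combination (-(B τ)) * hcc
      rw [h6]
      have h5 : 0 ≤ (C - μ (S τ)) / YP * B τ :=
        mul_nonneg (div_nonneg (by linarith) hYP.le) hB
      have h7 : (μ (S τ) / YP + mP) * B τ + -((C / YP + mP) * B τ)
          = -((C - μ (S τ)) / YP * B τ) := by ring
      rw [h7]; linarith
  have hPmono : MonotoneOn P (Set.Ici 0) := by
    apply monoOn_of_deriv' _ (fun τ => (μ (S τ) / YP + mP) * B τ) 0
    · exact fun τ hτ => (hODE τ hτ).2.2.2
    · intro τ hτ
      obtain ⟨_, hB, hS, _⟩ := hpos τ hτ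
      have := hμnn _ hS
      positivity
  have hPbdd : ∀ t ∈ Set.Ici (0:ℝ), P t ≤ P 0 + κ * W 0 := by
    intro t ht
    have h1 := hΨanti Set.self_mem_Ici ht ht
    have h2 : 0 ≤ κ * W t := mul_nonneg hκ (hWnonneg t ht)
    simp only at h1
    linarith
  obtain ⟨Pstar, hPtend, hPle⟩ := tendsto_of_monoOn P (P 0 + κ * W 0) hPmono hPbdd
  exact ⟨L, Pstar, hXtend, hBtend, hStend, hPtend, hL0, hPle 0 Set.self_mem_Ici, hLbound⟩
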